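/- Let K be a field, V a vector space over K, B : V →ₗ[K] V →ₗ[K] K a bilinear form, S a subset of V whose K-linear span is all of V, β ∈ V, and λ ∈ V with m := B(λ, β) ≠ 0. Then: (i) every element of the set T := { m • α − B(α, β) • λ : α ∈ S } satisfies B(t, β) = 0, and (ii) every δ ∈ V with B(δ, β) = 0 lies in the K-linear span of T. -/
import Mathlib


theorem stmt_2 {K V : Type*} [Field K] [AddCommGroup V] [Module K V]
    (B : V →ₗ[K] V →ₗ[K] K)
    (S : Set V) (hS : Submodule.span K S = ⊤)
    (β l : V) (hm : B l β ≠ 0) :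
    (∀ t ∈ {x : V | ∃ α ∈ S, x = B l β • α - B α β • l}, B t β = 0) ∧
    (∀ δ : V, B δ β = 0 →
      δ ∈ Submodule.span K {x : V | ∃ α ∈ S, x = B l β • α - B α β • l}) := by
  set T : Set V := {x : V | ∃ α ∈ S, x = B l β • α - B α β • l} with hT
  constructor
  · rintro t ⟨α, -, rfl⟩
    simp [mul_comm]
  · intro δ hδ
    -- linear map f v = (B l β) • v - (B v β) • l
    let f : V →ₗ[K] V :=
      (B l β) • LinearMap.id - (LinearMap.smulRight ((B.flip) β) l)
    have hfS : ∀ v : V, f v ∈ Submodule.span K T := by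
      intro v
      have hv : v ∈ Submodule.span K S := by rw [hS]; trivial
      refine Submodule.span_induction (p := fun v _ => f v ∈ Submodule.span K T)
        ?_ ?_ ?_ ?_ hv
      · intro x hx
        exact Submodule.subset_span ⟨x, hx, by simp [f]⟩
      · simp
      · intro x y _ _ hx hy
        rw [map_add]; exact Submodule.add_mem _ hx hy
      · intro a x _ hx
        rw [map_smul]; exact Submodule.smul_mem _ a hx
    have h := hfS δ
    have hfδ : f δ = B l β • δ := by simp [f, hδ]
    rw [hfδ] at h
    have := Submodule.smul_mem (Submodule.span K T) (B l β)⁻¹ h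
    rwa [inv_smul_smul₀ hm] at this
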